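/- Let G be a bipartite graph on vertex classes of sizes v and w with e edges, of minimum degree at least 2. Then the number of paths of length 3 in G (sequences of 4 distinct vertices x,y,z,t with consecutive adjacency) is at least e(e/v - 1)(e/w - 1). -/

import Mathlib

open Finset Real

private lemma bool_trans {a b c d : Bool} (h1 : a ≠ b) (h2 : b ≠ c) (h3 : c ≠ d) : a ≠ d := by
  revert h1 h2 h3; revert a b c d; decide

private lemma jensen_card {α : Type*} {t : Finset α} (ht : t.Nonempty) {S : Set ℝ}
    {f : ℝ → ℝ} (hf : ConvexOn ℝ S f) (p : α → ℝ) (hp : ∀ i ∈ t, p i ∈ S) :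
    (t.card : ℝ) * f ((∑ i ∈ t, p i) / t.card) ≤ ∑ i ∈ t, f (p i) := by
  have hc : (0:ℝ) < t.card := by exact_mod_cast ht.card_pos
  have h := hf.map_sum_le (w := fun _ => ((t.card : ℝ))⁻¹) (p := p)
      (fun i _ => by positivity)
      (by rw [Finset.sum_const, nsmul_eq_mul, mul_inv_cancel₀ hc.ne']) hp
  simp only [smul_eq_mul] at h
  rw [← Finset.mul_sum, ← Finset.mul_sum] at h
  rw [div_eq_inv_mul]
  calc (t.card:ℝ) * f ((t.card:ℝ)⁻¹ * ∑ i ∈ t, p i)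
      ≤ (t.card:ℝ) * ((t.card:ℝ)⁻¹ * ∑ i ∈ t, f (p i)) :=
        mul_le_mul_of_nonneg_left h hc.le
    _ = ∑ i ∈ t, f (p i) := by field_simp

private lemma convexOn_fconv : ConvexOn ℝ (Set.Ici 1) (fun x : ℝ => (x + 1) * Real.log x) := by
  have h1 : ∀ x : ℝ, x ≠ 0 → HasDerivAt (fun y : ℝ => (y + 1) * Real.log y)
      (Real.log x + 1 + x⁻¹) x := by
    intro x hx
    have h := ((hasDerivAt_id x).add_const 1).mul (Real.hasDerivAt_log hx)
    refine h.congr_deriv ?_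
    rw [id_eq, add_mul, mul_inv_cancel₀ hx]
    ring
  have h2 : ∀ x : ℝ, x ≠ 0 → HasDerivAt (fun y : ℝ => Real.log y + 1 + y⁻¹)
      (x⁻¹ - (x ^ 2)⁻¹) x := by
    intro x hx
    have h := ((Real.hasDerivAt_log hx).add_const 1).add (hasDerivAt_inv hx)
    exact h.congr_deriv (by ring)
  apply convexOn_of_hasDerivWithinAt2_nonneg (f' := fun y : ℝ => Real.log y + 1 + y⁻¹)
      (f'' := fun y : ℝ => y⁻¹ - (y ^ 2)⁻¹) (convex_Ici 1)
  · exact ContinuousOn.mul ((continuous_id.add continuous_const).continuousOn)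
      (Real.continuousOn_log.mono (fun x hx => by
        simp only [Set.mem_compl_iff, Set.mem_singleton_iff]
        intro h
        rw [h] at hx
        exact absurd hx (by norm_num)))
  · intro x hx
    rw [interior_Ici] at hx
    exact (h1 x (ne_of_gt (zero_lt_one.trans hx))).hasDerivWithinAt
  · intro x hx
    rw [interior_Ici] at hx
    exact (h2 x (ne_of_gt (zero_lt_one.trans hx))).hasDerivWithinAt
  · intro x hx
    rw [interior_Ici] at hx
    have hx0 : (0:ℝ) < x := zero_lt_one.trans hx
    have hx1 : (1:ℝ) < x := hx
    have : (x^2)⁻¹ ≤ x⁻¹ := by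
      apply inv_anti₀ hx0
      nlinarith
    linarith

theorem stmt_12 (v w : ℕ) (G : SimpleGraph (Fin v ⊕ Fin w)) [DecidableRel G.Adj]
    (hbip : ∀ x y, G.Adj x y → x.isLeft ≠ y.isLeft)
    (hdeg : ∀ x, 2 ≤ G.degree x)
    (e : ℕ) (he : e = G.edgeFinset.card) :
    ((Finset.univ.filter
        (fun p : (Fin v ⊕ Fin w) × (Fin v ⊕ Fin w) × (Fin v ⊕ Fin w) × (Fin v ⊕ Fin w) =>
          p.1 ≠ p.2.1 ∧ p.1 ≠ p.2.2.1 ∧ p.1 ≠ p.2.2.2 ∧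
          p.2.1 ≠ p.2.2.1 ∧ p.2.1 ≠ p.2.2.2 ∧ p.2.2.1 ≠ p.2.2.2 ∧
          G.Adj p.1 p.2.1 ∧ G.Adj p.2.1 p.2.2.1 ∧ G.Adj p.2.2.1 p.2.2.2)).card : ℝ) ≥
      e * ((e : ℝ) / v - 1) * ((e : ℝ) / w - 1) := by
  classical
  -- degenerate case : no vertices
  by_cases hv0 : v = 0
  · have hw0 : w = 0 := by
      by_contra hw
      have hwpos : 0 < w := Nat.pos_of_ne_zero hw
      set x : Fin v ⊕ Fin w := Sum.inr ⟨0, hwpos⟩ with hx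
      have hd := hdeg x
      have hpos : 0 < (G.neighborFinset x).card := by
        rw [SimpleGraph.card_neighborFinset_eq_degree]; omega
      obtain ⟨y, hy⟩ := Finset.card_pos.mp hpos
      rw [SimpleGraph.mem_neighborFinset] at hy
      have hside := hbip x y hy
      match y with
      | Sum.inl a => exact Fin.elim0 (hv0 ▸ a)
      | Sum.inr b => simp [hx] at hside
    have he0 : e = 0 := by
      rcases Finset.eq_empty_or_nonempty G.edgeFinset with hE | ⟨ed, hed⟩
      · rw [he, hE]; simp
      · exfalso
        induction ed using Sym2.ind with
        | _ x y =>
          match x with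
          | Sum.inl a => exact Fin.elim0 (hv0 ▸ a)
          | Sum.inr b => exact Fin.elim0 (hw0 ▸ b)
    rw [he0]
    simp only [Nat.cast_zero, zero_mul, zero_div]
    positivity
  -- degenerate case : w = 0 (impossible)
  by_cases hw0 : w = 0
  · exfalso
    have hvpos : 0 < v := Nat.pos_of_ne_zero hv0
    set x : Fin v ⊕ Fin w := Sum.inl ⟨0, hvpos⟩ with hx
    have hd := hdeg x
    have hpos : 0 < (G.neighborFinset x).card := by
      rw [SimpleGraph.card_neighborFinset_eq_degree]; omega
    obtain ⟨y, hy⟩ := Finset.card_pos.mp hpos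
    rw [SimpleGraph.mem_neighborFinset] at hy
    have hside := hbip x y hy
    match y with
    | Sum.inl a => simp [hx] at hside
    | Sum.inr b => exact Fin.elim0 (hw0 ▸ b)
  -- main case
  set S := (Finset.univ.filter
        (fun p : (Fin v ⊕ Fin w) × (Fin v ⊕ Fin w) × (Fin v ⊕ Fin w) × (Fin v ⊕ Fin w) =>
          p.1 ≠ p.2.1 ∧ p.1 ≠ p.2.2.1 ∧ p.1 ≠ p.2.2.2 ∧
          p.2.1 ≠ p.2.2.1 ∧ p.2.1 ≠ p.2.2.2 ∧ p.2.2.1 ≠ p.2.2.2 ∧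
          G.Adj p.1 p.2.1 ∧ G.Adj p.2.1 p.2.2.1 ∧ G.Adj p.2.2.1 p.2.2.2)) with hS
  set A : Finset (Fin v ⊕ Fin w) := univ.filter (fun x => x.isLeft = true) with hA
  set B : Finset (Fin v ⊕ Fin w) := univ.filter (fun x => ¬ x.isLeft = true) with hB
  set D : Finset ((Fin v ⊕ Fin w) × (Fin v ⊕ Fin w)) :=
    univ.filter (fun q => G.Adj q.1 q.2 ∧ q.1.isLeft = true) with hD
  set Dfull : Finset ((Fin v ⊕ Fin w) × (Fin v ⊕ Fin w)) :=
    univ.filter (fun q => G.Adj q.1 q.2) with hDfull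
  have cardA : A.card = v := by
    have : A = (univ : Finset (Fin v)).image Sum.inl := by
      ext x
      cases x <;> simp [hA]
    rw [this, Finset.card_image_of_injective _ Sum.inl_injective, Finset.card_univ,
      Fintype.card_fin]
  have cardB : B.card = w := by
    have : B = (univ : Finset (Fin w)).image Sum.inr := by
      ext x
      cases x <;> simp [hB]
    rw [this, Finset.card_image_of_injective _ Sum.inr_injective, Finset.card_univ,
      Fintype.card_fin]
  -- fiberwise sum identities
  have sumD1 : ∀ H : (Fin v ⊕ Fin w) × (Fin v ⊕ Fin w) → ℝ,
      ∑ q ∈ D, H q = ∑ y ∈ A, ∑ z ∈ G.neighborFinset y, H (y, z) := by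
    intro H
    rw [hD, hA, Finset.sum_filter, Finset.sum_filter, Fintype.sum_prod_type]
    refine Finset.sum_congr rfl (fun y _ => ?_)
    by_cases hy : y.isLeft = true
    · simp only [hy, and_true, if_true]
      rw [SimpleGraph.neighborFinset_eq_filter, Finset.sum_filter]
    · simp [hy]
  have sumD2 : ∀ H : (Fin v ⊕ Fin w) × (Fin v ⊕ Fin w) → ℝ,
      ∑ q ∈ D, H q = ∑ z ∈ B, ∑ y ∈ G.neighborFinset z, H (y, z) := by
    intro H
    rw [hD, hB, Finset.sum_filter, Finset.sum_filter, Fintype.sum_prod_type_right]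
    refine Finset.sum_congr rfl (fun z _ => ?_)
    by_cases hz : z.isLeft = true
    · rw [if_neg (by simp [hz])]
      refine Finset.sum_eq_zero (fun y _ => ?_)
      rw [if_neg]
      rintro ⟨hadj, hyl⟩
      exact (hbip y z hadj) (by rw [hyl, hz])
    · rw [if_pos (by simp [hz])]
      have hfil : univ.filter (fun y : Fin v ⊕ Fin w => G.Adj y z ∧ y.isLeft = true)
          = G.neighborFinset z := by
        ext y
        simp only [Finset.mem_filter, Finset.mem_univ, true_and,
          SimpleGraph.mem_neighborFinset]
        constructor
        · rintro ⟨h1, _⟩; exact h1.symm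
        · intro h
          refine ⟨h.symm, ?_⟩
          have := hbip z y h
          revert this hz
          cases z.isLeft <;> cases y.isLeft <;> simp
      rw [← hfil, Finset.sum_filter]
  -- D.card = e
  have hDe : D.card = e := by
    rw [he]
    apply Finset.card_bij (s := D) (t := G.edgeFinset) (fun q _ => Sym2.mk q.1 q.2)
    · rintro ⟨y, z⟩ hq
      rw [SimpleGraph.mem_edgeFinset, SimpleGraph.mem_edgeSet]
      rw [hD, Finset.mem_filter] at hq
      exact hq.2.1
    · rintro ⟨y₁, z₁⟩ h₁ ⟨y₂, z₂⟩ h₂ heq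
      rw [hD, Finset.mem_filter] at h₁ h₂
      rw [Sym2.mk_eq_mk_iff] at heq
      rcases heq with heq | heq
      · exact heq
      · exfalso
        simp only [Prod.swap_prod_mk, Prod.mk.injEq] at heq
        obtain ⟨h1, h2⟩ := heq
        have hb := hbip y₁ z₁ h₁.2.1
        exact hb (by rw [h₁.2.2, h2, h₂.2.2])
    · intro b hb
      induction b using Sym2.ind with
      | _ x y =>
        rw [SimpleGraph.mem_edgeFinset, SimpleGraph.mem_edgeSet] at hb
        have hside := hbip x y hb
        by_cases hx : x.isLeft = true
        · exact ⟨(x, y), Finset.mem_filter.mpr ⟨Finset.mem_univ _, hb, hx⟩, rfl⟩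
        · have hy : y.isLeft = true := by
            revert hside hx; cases x.isLeft <;> cases y.isLeft <;> simp
          exact ⟨(y, x), Finset.mem_filter.mpr ⟨Finset.mem_univ _, hb.symm, hy⟩, Sym2.eq_swap⟩
  -- counting paths fiberwise over the middle edge
  have hcount : S.card = ∑ q ∈ Dfull, (((G.neighborFinset q.1).erase q.2).card *
      ((G.neighborFinset q.2).erase q.1).card) := by
    rw [Finset.card_eq_sum_card_fiberwise (f := fun p => (p.2.1, p.2.2.1)) (t := Dfull)
      (fun p hp => by
        rw [Finset.mem_coe, hS, Finset.mem_filter] at hp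
        rw [Finset.mem_coe, hDfull, Finset.mem_filter]
        exact ⟨Finset.mem_univ _, hp.2.2.2.2.2.2.2.2.1⟩)]
    refine Finset.sum_congr rfl (fun q hq => ?_)
    rcases q with ⟨u, r⟩
    have hadj : G.Adj u r := by rw [hDfull, Finset.mem_filter] at hq; exact hq.2
    rw [← Finset.card_product]
    apply Finset.card_bij (fun p _ => (p.1, p.2.2.2))
    · rintro ⟨x, y, z, t⟩ hp
      rw [Finset.mem_filter, hS, Finset.mem_filter] at hp
      obtain ⟨⟨_, h1, h2, h3, h4, h5, h6, ha1, ha2, ha3⟩, hmid⟩ := hp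
      rw [Prod.mk.injEq] at hmid
      obtain ⟨hy, hz⟩ := hmid
      subst hy; subst hz
      simp only [Finset.mem_product, Finset.mem_erase, SimpleGraph.mem_neighborFinset]
      exact ⟨⟨h2, ha1.symm⟩, ⟨Ne.symm h5, ha3⟩⟩
    · rintro ⟨x₁, y₁, z₁, t₁⟩ h₁ ⟨x₂, y₂, z₂, t₂⟩ h₂ heq
      rw [Finset.mem_filter] at h₁ h₂
      rw [Prod.mk.injEq] at heq
      have e1 := h₁.2
      have e2 := h₂.2
      rw [Prod.mk.injEq] at e1 e2
      simp only [Prod.mk.injEq]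
      exact ⟨heq.1, e1.1.trans e2.1.symm, e1.2.trans e2.2.symm, heq.2⟩
    · rintro ⟨x, t⟩ hxt
      simp only [Finset.mem_product, Finset.mem_erase, SimpleGraph.mem_neighborFinset] at hxt
      obtain ⟨⟨hxr, hux⟩, ⟨htu, hrt⟩⟩ := hxt
      have hxt' : x ≠ t := by
        intro hc
        have b1 : x.isLeft ≠ u.isLeft := (hbip u x hux).symm
        have b2 : u.isLeft ≠ r.isLeft := hbip u r hadj
        have b3 : r.isLeft ≠ t.isLeft := hbip r t hrt
        exact (bool_trans b1 b2 b3) (by rw [hc])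
      refine ⟨(x, u, r, t), Finset.mem_filter.mpr ⟨?_, rfl⟩, rfl⟩
      rw [hS, Finset.mem_filter]
      exact ⟨Finset.mem_univ _, hux.ne', hxr, hxt', hadj.ne, Ne.symm htu, hrt.ne,
        hux.symm, hadj, hrt⟩
  -- real-valued degree minus one
  set F : (Fin v ⊕ Fin w) → ℝ := fun x => (G.degree x : ℝ) - 1 with hF
  have hF1 : ∀ x, 1 ≤ F x := fun x => by
    have h2 : (2:ℝ) ≤ (G.degree x : ℝ) := by exact_mod_cast hdeg x
    rw [hF]; dsimp only; linarith
  have hFpos : ∀ x, 0 < F x := fun x => lt_of_lt_of_le zero_lt_one (hF1 x)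
  have hsub : D ⊆ Dfull := fun q hq => by
    rw [hD, Finset.mem_filter] at hq
    rw [hDfull, Finset.mem_filter]
    exact ⟨hq.1, hq.2.1⟩
  have hcount2 : ∑ q ∈ D, F q.1 * F q.2 ≤ (S.card : ℝ) := by
    rw [hcount]
    push_cast
    calc ∑ q ∈ D, F q.1 * F q.2
        = ∑ q ∈ D, ((((G.neighborFinset q.1).erase q.2).card : ℝ) *
          (((G.neighborFinset q.2).erase q.1).card : ℝ)) := by
          refine Finset.sum_congr rfl (fun q hq => ?_)
          rw [hD, Finset.mem_filter] at hq
          have m1 : q.2 ∈ G.neighborFinset q.1 := by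
            rw [SimpleGraph.mem_neighborFinset]; exact hq.2.1
          have m2 : q.1 ∈ G.neighborFinset q.2 := by
            rw [SimpleGraph.mem_neighborFinset]; exact hq.2.1.symm
          rw [Finset.card_erase_of_mem m1, Finset.card_erase_of_mem m2,
            SimpleGraph.card_neighborFinset_eq_degree, SimpleGraph.card_neighborFinset_eq_degree,
            Nat.cast_sub (by have := hdeg q.1; omega), Nat.cast_sub (by have := hdeg q.2; omega),
            Nat.cast_one]
      _ ≤ ∑ q ∈ Dfull, ((((G.neighborFinset q.1).erase q.2).card : ℝ) *
          (((G.neighborFinset q.2).erase q.1).card : ℝ)) :=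
          Finset.sum_le_sum_of_subset_of_nonneg hsub (fun q _ _ => by positivity)
  -- degree sums on each side
  have hvR : (0:ℝ) < v := by exact_mod_cast Nat.pos_of_ne_zero hv0
  have hwR : (0:ℝ) < w := by exact_mod_cast Nat.pos_of_ne_zero hw0
  have hsumA : ∑ y ∈ A, (G.degree y : ℝ) = (e:ℝ) := by
    have h1 := sumD1 (fun _ => (1:ℝ))
    simp only [Finset.sum_const, nsmul_eq_mul, mul_one,
      SimpleGraph.card_neighborFinset_eq_degree] at h1
    rw [hDe] at h1
    exact h1.symm
  have hsumB : ∑ z ∈ B, (G.degree z : ℝ) = (e:ℝ) := by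
    have h1 := sumD2 (fun _ => (1:ℝ))
    simp only [Finset.sum_const, nsmul_eq_mul, mul_one,
      SimpleGraph.card_neighborFinset_eq_degree] at h1
    rw [hDe] at h1
    exact h1.symm
  have h2v : 2 * (v:ℝ) ≤ (e:ℝ) := by
    calc 2*(v:ℝ) = ∑ _y ∈ A, (2:ℝ) := by
          rw [Finset.sum_const, nsmul_eq_mul, cardA]; ring
      _ ≤ ∑ y ∈ A, (G.degree y:ℝ) := Finset.sum_le_sum (fun i _ => by exact_mod_cast hdeg i)
      _ = (e:ℝ) := hsumA
  have h2w : 2 * (w:ℝ) ≤ (e:ℝ) := by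
    calc 2*(w:ℝ) = ∑ _z ∈ B, (2:ℝ) := by
          rw [Finset.sum_const, nsmul_eq_mul, cardB]; ring
      _ ≤ ∑ z ∈ B, (G.degree z:ℝ) := Finset.sum_le_sum (fun i _ => by exact_mod_cast hdeg i)
      _ = (e:ℝ) := hsumB
  set a : ℝ := (e:ℝ)/v - 1 with ha
  set b : ℝ := (e:ℝ)/w - 1 with hb
  have ha1 : 1 ≤ a := by
    have h : (2:ℝ) ≤ (e:ℝ)/v := (le_div_iff₀ hvR).mpr (by linarith)
    rw [ha]; linarith
  have hb1 : 1 ≤ b := by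
    have h : (2:ℝ) ≤ (e:ℝ)/w := (le_div_iff₀ hwR).mpr (by linarith)
    rw [hb]; linarith
  have ha0 : (0:ℝ) < a := lt_of_lt_of_le zero_lt_one ha1
  have hb0 : (0:ℝ) < b := lt_of_lt_of_le zero_lt_one hb1
  have heR : (0:ℝ) < (e:ℝ) := by linarith
  have hsumFA : ∑ y ∈ A, F y = (e:ℝ) - v := by
    calc ∑ y ∈ A, F y = (∑ y ∈ A, (G.degree y:ℝ)) - ∑ _y ∈ A, (1:ℝ) := by
          rw [← Finset.sum_sub_distrib]
      _ = (e:ℝ) - v := by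
          rw [hsumA, Finset.sum_const, nsmul_eq_mul, mul_one, cardA]
  have hsumFB : ∑ z ∈ B, F z = (e:ℝ) - w := by
    calc ∑ z ∈ B, F z = (∑ z ∈ B, (G.degree z:ℝ)) - ∑ _z ∈ B, (1:ℝ) := by
          rw [← Finset.sum_sub_distrib]
      _ = (e:ℝ) - w := by
          rw [hsumB, Finset.sum_const, nsmul_eq_mul, mul_one, cardB]
  -- Jensen on side A
  have hAne : A.Nonempty := Finset.card_pos.mp (by rw [cardA]; exact Nat.pos_of_ne_zero hv0)
  have hBne : B.Nonempty := Finset.card_pos.mp (by rw [cardB]; exact Nat.pos_of_ne_zero hw0)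
  have hsumlogA : (e:ℝ) * Real.log a ≤ ∑ q ∈ D, Real.log (F q.1) := by
    have hJA := jensen_card hAne convexOn_fconv (fun y => F y)
      (fun i _ => Set.mem_Ici.mpr (hF1 i))
    rw [cardA, hsumFA] at hJA
    have hmean : ((e:ℝ) - v)/v = a := by rw [ha]; field_simp
    rw [hmean] at hJA
    rw [sumD1 (fun q => Real.log (F q.1))]
    calc (e:ℝ) * Real.log a = (v:ℝ) * ((a+1) * Real.log a) := by
          have : (a:ℝ) + 1 = (e:ℝ)/v := by rw [ha]; ring
          rw [this]
          field_simp
      _ ≤ ∑ y ∈ A, (F y + 1) * Real.log (F y) := hJA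
      _ = ∑ y ∈ A, ∑ _z ∈ G.neighborFinset y, Real.log (F y) := by
          refine Finset.sum_congr rfl (fun y _ => ?_)
          rw [Finset.sum_const, nsmul_eq_mul, SimpleGraph.card_neighborFinset_eq_degree]
          have hFy : F y + 1 = (G.degree y : ℝ) := by rw [hF]; ring
          rw [hFy]
  have hsumlogB : (e:ℝ) * Real.log b ≤ ∑ q ∈ D, Real.log (F q.2) := by
    have hJB := jensen_card hBne convexOn_fconv (fun z => F z)
      (fun i _ => Set.mem_Ici.mpr (hF1 i))
    rw [cardB, hsumFB] at hJB
    have hmean : ((e:ℝ) - w)/w = b := by rw [hb]; field_simp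
    rw [hmean] at hJB
    rw [sumD2 (fun q => Real.log (F q.2))]
    calc (e:ℝ) * Real.log b = (w:ℝ) * ((b+1) * Real.log b) := by
          have : (b:ℝ) + 1 = (e:ℝ)/w := by rw [hb]; ring
          rw [this]
          field_simp
      _ ≤ ∑ z ∈ B, (F z + 1) * Real.log (F z) := hJB
      _ = ∑ z ∈ B, ∑ _y ∈ G.neighborFinset z, Real.log (F z) := by
          refine Finset.sum_congr rfl (fun z _ => ?_)
          rw [Finset.sum_const, nsmul_eq_mul, SimpleGraph.card_neighborFinset_eq_degree]
          have hFz : F z + 1 = (G.degree z : ℝ) := by rw [hF]; ring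
          rw [hFz]
  -- Jensen for exp over the edges
  have hDne : D.Nonempty := Finset.card_pos.mp (by
    rw [hDe]
    have : (0:ℝ) < (e:ℝ) := heR
    exact_mod_cast this)
  have hJE := jensen_card hDne convexOn_exp
    (fun q => Real.log (F q.1) + Real.log (F q.2)) (fun i _ => Set.mem_univ _)
  rw [hDe] at hJE
  have hexp : ∑ q ∈ D, Real.exp (Real.log (F q.1) + Real.log (F q.2))
      = ∑ q ∈ D, F q.1 * F q.2 := by
    refine Finset.sum_congr rfl (fun q _ => ?_)
    rw [Real.exp_add, Real.exp_log (hFpos _), Real.exp_log (hFpos _)]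
  have hsplit : ∑ q ∈ D, (Real.log (F q.1) + Real.log (F q.2))
      = (∑ q ∈ D, Real.log (F q.1)) + ∑ q ∈ D, Real.log (F q.2) :=
    Finset.sum_add_distrib
  have hmono : (e:ℝ) * (a * b) ≤ ∑ q ∈ D, F q.1 * F q.2 := by
    have h1 : Real.log a + Real.log b
        ≤ (∑ q ∈ D, (Real.log (F q.1) + Real.log (F q.2)))/(e:ℝ) := by
      rw [le_div_iff₀ heR, hsplit]
      have hexpand : (Real.log a + Real.log b) * (e:ℝ)
          = (e:ℝ) * Real.log a + (e:ℝ) * Real.log b := by ring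
      rw [hexpand]
      exact add_le_add hsumlogA hsumlogB
    calc (e:ℝ) * (a*b) = (e:ℝ) * Real.exp (Real.log a + Real.log b) := by
          rw [Real.exp_add, Real.exp_log ha0, Real.exp_log hb0]
      _ ≤ (e:ℝ) * Real.exp ((∑ q ∈ D, (Real.log (F q.1) + Real.log (F q.2)))/(e:ℝ)) :=
          mul_le_mul_of_nonneg_left (Real.exp_le_exp.mpr h1) heR.le
      _ ≤ ∑ q ∈ D, Real.exp (Real.log (F q.1) + Real.log (F q.2)) := hJE
      _ = ∑ q ∈ D, F q.1 * F q.2 := hexp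
  calc (e:ℝ) * a * b = (e:ℝ) * (a * b) := by ring
    _ ≤ ∑ q ∈ D, F q.1 * F q.2 := hmono
    _ ≤ (S.card : ℝ) := hcount2
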